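/- arXiv:1509.04998 — 3 statements merged into one kernel-verified Lean document; each statement's English description precedes it below -/
import Mathlib

section
/- Let n be a positive integer, a a positive integer, and k an odd positive integer with 2^a·k ≤ n. Let g ∈ S_n be a permutation that has exactly one cycle of length 2^a·k, and all of whose other cycles have lengths not divisible by 2^a. Then g has even order and g^{|g|/2} is an involution whose support has cardinality exactly 2^a·k. -/
lemma aux_lcm_not_dvd (a : ℕ) (ha : 0 < a) (s : Multiset ℕ)
    (h : ∀ d ∈ s, ¬ 2 ^ a ∣ d) : ¬ 2 ^ a ∣ s.lcm := by
  induction s using Multiset.induction with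
  | empty =>
    simp only [Multiset.lcm_zero]
    intro hd
    have h1 := Nat.le_of_dvd one_pos hd
    have h2 : (1:ℕ) < 2^a := Nat.one_lt_two_pow ha.ne'
    omega
  | cons x s ih =>
    have hx : ¬ 2 ^ a ∣ x := h x (Multiset.mem_cons_self x s)
    have ih' : ¬ 2 ^ a ∣ s.lcm := ih (fun d hd => h d (Multiset.mem_cons_of_mem hd))
    have hx0 : x ≠ 0 := by rintro rfl; exact hx (dvd_zero _)
    have hl0 : s.lcm ≠ 0 := by rintro h0; exact ih' (h0 ▸ dvd_zero _)
    rw [Multiset.lcm_cons, lcm_eq_nat_lcm]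
    intro hdvd
    have hlcm0 : Nat.lcm x s.lcm ≠ 0 := Nat.lcm_ne_zero hx0 hl0
    rw [Nat.Prime.pow_dvd_iff_le_factorization Nat.prime_two hlcm0,
      Nat.factorization_lcm hx0 hl0, Finsupp.sup_apply, le_sup_iff] at hdvd
    rcases hdvd with h1 | h1
    · exact hx ((Nat.Prime.pow_dvd_iff_le_factorization Nat.prime_two hx0).2 h1)
    · exact ih' ((Nat.Prime.pow_dvd_iff_le_factorization Nat.prime_two hl0).2 h1)

theorem stmt2 (n a k : ℕ) (hn : 0 < n) (ha : 0 < a) (hk : Odd k)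
    (hle : 2 ^ a * k ≤ n) (g c σ : Equiv.Perm (Fin n))
    (hg : g = c * σ) (hdisj : c.Disjoint σ) (hc : c.IsCycle)
    (hclen : c.support.card = 2 ^ a * k)
    (hσ : ∀ d ∈ σ.cycleType, ¬ 2 ^ a ∣ d) :
    Even (orderOf g) ∧ orderOf (g ^ (orderOf g / 2)) = 2 ∧
      (g ^ (orderOf g / 2)).support.card = 2 ^ a * k := by
  have hA : orderOf c = 2 ^ a * k := by rw [hc.orderOf, hclen]
  set A := orderOf c with hAdef
  set B := orderOf σ with hBdef
  have hBnd : ¬ 2 ^ a ∣ B := by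
    rw [hBdef, ← Equiv.Perm.lcm_cycleType]
    exact aux_lcm_not_dvd a ha _ hσ
  have hB0 : B ≠ 0 := (orderOf_pos σ).ne'
  have hN : orderOf g = Nat.lcm A B := by rw [hg]; exact hdisj.orderOf
  set N := orderOf g with hNdef
  have hAdvdN : A ∣ N := hN ▸ Nat.dvd_lcm_left A B
  have hBdvdN : B ∣ N := hN ▸ Nat.dvd_lcm_right A B
  have h2aA : 2 ^ a ∣ A := hA ▸ Dvd.intro k rfl
  have h2aN : (2:ℕ) ^ a ∣ N := h2aA.trans hAdvdN
  have h2N : 2 ∣ N := dvd_trans (dvd_pow_self 2 ha.ne') h2aN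
  have hEven : Even N := even_iff_two_dvd.2 h2N
  have hN0 : N ≠ 0 := (orderOf_pos g).ne'
  set b := B.factorization 2 with hbdef
  have hb : b < a := by
    by_contra hba
    push_neg at hba
    exact hBnd ((pow_dvd_pow 2 hba).trans (Nat.ordProj_dvd B 2))
  have h2B : 2 * B ∣ N := by
    have hm : ¬ (2:ℕ) ∣ ordCompl[2] B := Nat.not_dvd_ordCompl Nat.prime_two hB0
    have hcop : Nat.Coprime (2 ^ (b + 1)) (ordCompl[2] B) :=
      ((Nat.Prime.coprime_iff_not_dvd Nat.prime_two).2 hm).pow_left _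
    have h1 : (2:ℕ) ^ (b + 1) ∣ N := (pow_dvd_pow 2 hb).trans h2aN
    have h2 : ordCompl[2] B ∣ N := (Nat.ordCompl_dvd B 2).trans hBdvdN
    have h3 := hcop.mul_dvd_of_dvd_of_dvd h1 h2
    have h4 : 2 ^ (b + 1) * ordCompl[2] B = 2 * B := by
      conv_rhs => rw [← Nat.ordProj_mul_ordCompl_eq_self B 2]
      ring
    rwa [h4] at h3
  have hBdvd : B ∣ N / 2 := (Nat.dvd_div_iff_mul_dvd h2N).2 h2B
  have hσpow : σ ^ (N / 2) = 1 := orderOf_dvd_iff_pow_eq_one.1 hBdvd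
  have hgp : g ^ (N / 2) = c ^ (N / 2) := by
    rw [hg, hdisj.commute.mul_pow, hσpow, mul_one]
  have hnotA : ¬ A ∣ N / 2 := by
    intro hAd
    have : N ∣ N / 2 := by
      have h7 := Nat.lcm_dvd hAd hBdvd
      rwa [← hN] at h7
    have h5 := Nat.le_of_dvd (Nat.div_pos (Nat.le_of_dvd (Nat.pos_of_ne_zero hN0) h2N)
      two_pos) this
    have h6 := Nat.div_lt_self (Nat.pos_of_ne_zero hN0) one_lt_two
    omega
  have hsupp : (c ^ (N / 2)).support = c.support := hc.support_pow_eq_iff.2 hnotA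
  have hcard : (g ^ (N / 2)).support.card = 2 ^ a * k := by
    rw [hgp, hsupp, hclen]
  refine ⟨hEven, ?_, hcard⟩
  have hne1 : g ^ (N / 2) ≠ 1 := by
    intro h1
    rw [h1, Equiv.Perm.support_one, Finset.card_empty] at hcard
    have : 0 < 2 ^ a * k := Nat.mul_pos (pow_pos two_pos a) hk.pos
    omega
  have hsq : (g ^ (N / 2)) ^ 2 = 1 := by
    rw [← pow_mul, Nat.div_mul_cancel h2N, pow_orderOf_eq_one]
  exact orderOf_eq_prime hsq hne1
end

section
/- Let n be a positive integer, a a positive integer, and k an odd positive integer with 2^a·k ≤ n. Let g ∈ S_n be a permutation that has exactly one cycle of length 2^a·k, all of whose other cycles have lengths not divisible by 2^a, and such that the product of those other cycles is an odd permutation. Then g lies in the alternating group A_n, g has even order, and g^{|g|/2} is an involution whose support has cardinality exactly 2^a·k. -/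
theorem stmt3 (n a k : ℕ) (hn : 0 < n) (ha : 0 < a) (hk : Odd k)
    (hle : 2 ^ a * k ≤ n) (g c σ : Equiv.Perm (Fin n))
    (hg : g = c * σ) (hdisj : c.Disjoint σ) (hc : c.IsCycle)
    (hclen : c.support.card = 2 ^ a * k)
    (hσ : ∀ d ∈ σ.cycleType, ¬ 2 ^ a ∣ d)
    (hsign : Equiv.Perm.sign σ = -1) :
    g ∈ alternatingGroup (Fin n) ∧ Even (orderOf g) ∧
      orderOf (g ^ (orderOf g / 2)) = 2 ∧
      (g ^ (orderOf g / 2)).support.card = 2 ^ a * k := by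
  have hk0 : k ≠ 0 := by rintro rfl; simp [Nat.odd_iff] at hk
  have hndk : ¬ (2 ∣ k) := by
    rw [Nat.odd_iff] at hk; omega
  have hL0 : 2 ^ a * k ≠ 0 := by positivity
  have hoc : orderOf c = 2 ^ a * k := by rw [hc.orderOf, hclen]
  have hog : orderOf g = Nat.lcm (orderOf c) (orderOf σ) := by
    rw [hg, hdisj.orderOf]
  have hs0 : orderOf σ ≠ 0 := (orderOf_pos σ).ne'
  have hm0 : orderOf g ≠ 0 := (orderOf_pos g).ne'
  set s := orderOf σ
  set m := orderOf g
  -- 2-adic valuation of the cycle length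
  have hfL : (2 ^ a * k).factorization 2 = a := by
    rw [Nat.factorization_mul (by positivity) hk0,
      Nat.prime_two.factorization_pow]
    simp [Nat.factorization_eq_zero_of_not_dvd hndk]
  -- ¬ 2^a ∣ s
  have hkey : ∀ M : Multiset ℕ, (∀ d ∈ M, ¬ 2 ^ a ∣ d) → ¬ 2 ^ a ∣ M.lcm := by
    intro M
    induction M using Multiset.induction with
    | empty =>
      intro _ hdvd
      simp only [Multiset.lcm_zero] at hdvd
      have h1 := Nat.le_of_dvd one_pos hdvd
      have h2 : 1 < 2 ^ a := Nat.one_lt_two_pow_iff.mpr ha.ne'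
      omega
    | cons d M ih =>
      intro h hdvd
      have hd : ¬ 2 ^ a ∣ d := h d (Multiset.mem_cons_self d M)
      have hM : ¬ 2 ^ a ∣ M.lcm := ih fun x hx => h x (Multiset.mem_cons_of_mem hx)
      have hd0 : d ≠ 0 := fun h0 => hd (h0 ▸ dvd_zero _)
      have hM0 : M.lcm ≠ 0 := fun h0 => hM (h0 ▸ dvd_zero _)
      rw [Multiset.lcm_cons] at hdvd
      have hlcm : lcm d M.lcm = Nat.lcm d M.lcm := rfl
      rw [hlcm] at hdvd
      have hl0 : Nat.lcm d M.lcm ≠ 0 := Nat.lcm_ne_zero hd0 hM0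
      rw [Nat.prime_two.pow_dvd_iff_le_factorization hl0,
        Nat.factorization_lcm hd0 hM0, Finsupp.sup_apply, le_sup_iff] at hdvd
      rcases hdvd with h1 | h1
      · exact hd ((Nat.prime_two.pow_dvd_iff_le_factorization hd0).mpr h1)
      · exact hM ((Nat.prime_two.pow_dvd_iff_le_factorization hM0).mpr h1)
  have hsnd : ¬ 2 ^ a ∣ s := by
    show ¬ 2 ^ a ∣ orderOf σ
    rw [← σ.lcm_cycleType]; exact hkey _ hσ
  have hfs : s.factorization 2 < a := by
    by_contra h
    exact hsnd ((Nat.prime_two.pow_dvd_iff_le_factorization hs0).mpr (le_of_not_gt h))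
  -- valuation of m
  have hoc0 : orderOf c ≠ 0 := by rw [hoc]; exact hL0
  have hfm : m.factorization 2 = a := by
    rw [hog, Nat.factorization_lcm hoc0 hs0, Finsupp.sup_apply, hoc, hfL]
    exact sup_eq_left.mpr hfs.le
  have hevenm : Even m := by
    have : (2:ℕ) ∣ 2 ^ a * k := Dvd.dvd.mul_right (dvd_pow_self 2 ha.ne') k
    exact (even_iff_two_dvd).mpr (this.trans (hoc ▸ hog ▸ Nat.dvd_lcm_left _ _))
  have h2m : 2 ∣ m := hevenm.two_dvd
  -- s ∣ m / 2
  have hsm2 : s ∣ m / 2 := by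
    rw [Nat.dvd_div_iff_mul_dvd h2m]
    rw [← Nat.factorization_le_iff_dvd (by positivity) hm0]
    have hsm : s ∣ m := hog ▸ Nat.dvd_lcm_right _ _
    intro p
    rw [Nat.factorization_mul two_ne_zero hs0, Finsupp.add_apply]
    by_cases hp : p = 2
    · subst hp
      have hfs2 : (2:ℕ).factorization 2 = 1 := by
        rw [Nat.prime_two.factorization]; exact Finsupp.single_eq_same
      rw [hfs2, hfm]
      omega
    · have : (2:ℕ).factorization p = 0 := by
        rw [Nat.prime_two.factorization, Finsupp.single_apply,
          if_neg (fun h => hp h.symm)]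
      rw [this, zero_add]
      exact (Nat.factorization_le_iff_dvd hs0 hm0).mpr hsm p
  -- ¬ L ∣ m / 2
  have hLm2 : ¬ (2 ^ a * k) ∣ m / 2 := by
    intro h
    have h2a : (2:ℕ) ^ a ∣ m / 2 := (Dvd.dvd.mul_right (dvd_refl _) k).trans h
    rw [Nat.dvd_div_iff_mul_dvd h2m, ← pow_succ'] at h2a
    have := (Nat.prime_two.pow_dvd_iff_le_factorization hm0).mp h2a
    omega
  -- sign
  have hsignc : Equiv.Perm.sign c = -1 := by
    rw [hc.sign, hclen]
    have : Even (2 ^ a * k) := (even_iff_two_dvd).mpr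
      (Dvd.dvd.mul_right (dvd_pow_self 2 ha.ne') k)
    rw [this.neg_one_pow]
  have hmemA : g ∈ alternatingGroup (Fin n) := by
    rw [Equiv.Perm.mem_alternatingGroup, hg, map_mul, hsignc, hsign]
    decide
  -- order of g^(m/2)
  have hgt : g ^ (m / 2) = c ^ (m / 2) := by
    rw [hg, hdisj.commute.mul_pow, orderOf_dvd_iff_pow_eq_one.mp hsm2, mul_one]
  have horder2 : orderOf (g ^ (m / 2)) = 2 := by
    rw [orderOf_pow, Nat.gcd_eq_right (Nat.div_dvd_of_dvd h2m),
      Nat.div_div_self h2m hm0]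
  have hsupp : (g ^ (m / 2)).support.card = 2 ^ a * k := by
    rw [hgt, (hc.support_pow_eq_iff).mpr (hoc ▸ hLm2), hclen]
  exact ⟨hmemA, hevenm, horder2, hsupp⟩
end

section
/- Let ε ∈ (0,1) and let n be an integer satisfying ⌈(log(n)+1)²⌉ < ⌈n^ε⌉ ≤ n − 2⌈log(n)⌉. Set K = ⌊⌈n^ε⌉/⌈log(n)⌉⌋. Then p̃(n,ε) ≥ Σ_{k odd, 1 ≤ k ≤ K} Σ_{a ≥ 2, 2^a ≤ ⌈log(n)⌉} c_{¬2^a}(n − 2^a·k)/(2^a·k). -/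
/-- The proportion of elements `g` of the alternating group `Aₙ` such that `g` has even
order and `g^(|g|/2)` is an involution whose support has cardinality at most `⌈n^ε⌉`. -/
noncomputable def altPropn (n : ℕ) (ε : ℝ) : ℝ :=
  (Nat.card {g : alternatingGroup (Fin n) //
      Even (orderOf g) ∧ orderOf (g ^ (orderOf g / 2)) = 2 ∧
      ((((g ^ (orderOf g / 2) : alternatingGroup (Fin n)) :
          Equiv.Perm (Fin n)).support.card : ℤ) ≤ ⌈(n : ℝ) ^ ε⌉)} : ℝ) /
    Nat.card (alternatingGroup (Fin n))

/-- `cNot m ℓ` is the proportion of elements of `S_ℓ ∖ A_ℓ` having no cycle of length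
divisible by `m`. -/
noncomputable def cNot (m ℓ : ℕ) : ℝ :=
  (Nat.card {g : Equiv.Perm (Fin ℓ) //
      g ∉ alternatingGroup (Fin ℓ) ∧ ∀ d ∈ g.cycleType, ¬ m ∣ d} : ℝ) /
    Nat.card {g : Equiv.Perm (Fin ℓ) // g ∉ alternatingGroup (Fin ℓ)}

set_option linter.unusedSectionVars false
set_option maxHeartbeats 1000000
open Equiv Equiv.Perm Finset

variable {β γ : Type*} [DecidableEq β] [Fintype β] [DecidableEq γ] [Fintype γ]

lemma sumCongr_pow (c : Perm β) (h : Perm γ) (j : ℕ) :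
    (Equiv.sumCongr c h) ^ j = Equiv.sumCongr (c ^ j) (h ^ j) := by
  have := map_pow (Equiv.Perm.sumCongrHom β γ) (c, h) j
  simpa [Equiv.Perm.sumCongrHom, Prod.pow_def] using this.symm

lemma sumCongr_zpow (c : Perm β) (h : Perm γ) (j : ℤ) :
    (Equiv.sumCongr c h) ^ j = Equiv.sumCongr (c ^ j) (h ^ j) := by
  have := map_zpow (Equiv.Perm.sumCongrHom β γ) (c, h) j
  simpa [Equiv.Perm.sumCongrHom, Prod.pow_def] using this.symm

lemma sameCycle_sumCongr_inl {c : Perm β} {h : Perm γ} {x : β} {y : β ⊕ γ} :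
    Equiv.Perm.SameCycle (Equiv.sumCongr c h) (Sum.inl x) y ↔ ∃ z, c.SameCycle x z ∧ y = Sum.inl z := by
  constructor
  · rintro ⟨j, hj⟩
    rw [sumCongr_zpow] at hj
    exact ⟨(c ^ j) x, ⟨j, rfl⟩, by simpa using hj.symm⟩
  · rintro ⟨z, ⟨j, hj⟩, rfl⟩
    exact ⟨j, by simp [sumCongr_zpow, hj]⟩

lemma sameCycle_sumCongr_inr {c : Perm β} {h : Perm γ} {x : γ} {y : β ⊕ γ} :
    Equiv.Perm.SameCycle (Equiv.sumCongr c h) (Sum.inr x) y ↔ ∃ z, h.SameCycle x z ∧ y = Sum.inr z := by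
  constructor
  · rintro ⟨j, hj⟩
    rw [sumCongr_zpow] at hj
    exact ⟨(h ^ j) x, ⟨j, rfl⟩, by simpa using hj.symm⟩
  · rintro ⟨z, ⟨j, hj⟩, rfl⟩
    exact ⟨j, by simp [sumCongr_zpow, hj]⟩

lemma support_cycleOf_sumCongr_inl (c : Perm β) (h : Perm γ) (x : β) :
    (Equiv.Perm.cycleOf (Equiv.sumCongr c h) (Sum.inl x)).support
      = (c.cycleOf x).support.map ⟨Sum.inl, Sum.inl_injective⟩ := by
  ext y
  cases y with
  | inl z =>
      simp only [mem_support_cycleOf_iff, Finset.mem_map, Function.Embedding.coeFn_mk]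
      constructor
      · rintro ⟨hsc, hsup⟩
        rw [sameCycle_sumCongr_inl] at hsc
        obtain ⟨z', hz', hz⟩ := hsc
        injection hz with hz
        subst hz
        exact ⟨z, ⟨hz', by simpa [Equiv.Perm.mem_support] using hsup⟩, rfl⟩
      · rintro ⟨z', ⟨hsc, hsup⟩, hz⟩
        injection hz with hz
        subst hz
        exact ⟨sameCycle_sumCongr_inl.mpr ⟨z', hsc, rfl⟩, by
          simpa [Equiv.Perm.mem_support] using hsup⟩
  | inr z =>
      simp only [mem_support_cycleOf_iff, Finset.mem_map, Function.Embedding.coeFn_mk]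
      constructor
      · rintro ⟨hsc, _⟩
        rw [sameCycle_sumCongr_inl] at hsc
        obtain ⟨z', _, hz⟩ := hsc
        exact absurd hz (by simp)
      · rintro ⟨z', _, hz⟩
        exact absurd hz (by simp)

lemma support_cycleOf_sumCongr_inr (c : Perm β) (h : Perm γ) (x : γ) :
    (Equiv.Perm.cycleOf (Equiv.sumCongr c h) (Sum.inr x)).support
      = (h.cycleOf x).support.map ⟨Sum.inr, Sum.inr_injective⟩ := by
  ext y
  cases y with
  | inr z =>
      simp only [mem_support_cycleOf_iff, Finset.mem_map, Function.Embedding.coeFn_mk]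
      constructor
      · rintro ⟨hsc, hsup⟩
        rw [sameCycle_sumCongr_inr] at hsc
        obtain ⟨z', hz', hz⟩ := hsc
        injection hz with hz
        subst hz
        exact ⟨z, ⟨hz', by simpa [Equiv.Perm.mem_support] using hsup⟩, rfl⟩
      · rintro ⟨z', ⟨hsc, hsup⟩, hz⟩
        injection hz with hz
        subst hz
        exact ⟨sameCycle_sumCongr_inr.mpr ⟨z', hsc, rfl⟩, by
          simpa [Equiv.Perm.mem_support] using hsup⟩
  | inl z =>
      simp only [mem_support_cycleOf_iff, Finset.mem_map, Function.Embedding.coeFn_mk]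
      constructor
      · rintro ⟨hsc, _⟩
        rw [sameCycle_sumCongr_inr] at hsc
        obtain ⟨z', _, hz⟩ := hsc
        exact absurd hz (by simp)
      · rintro ⟨z', _, hz⟩
        exact absurd hz (by simp)

lemma cycleOf_conj' {α : Type*} [DecidableEq α] [Fintype α] (σ w : Perm α) (x : α) :
    Equiv.Perm.cycleOf (w * σ * w⁻¹) (w x) = w * σ.cycleOf x * w⁻¹ := by
  ext y
  rw [Equiv.Perm.cycleOf_apply]
  have hsc : Equiv.Perm.SameCycle (w * σ * w⁻¹) (w x) y ↔ σ.SameCycle x (w⁻¹ y) := by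
    rw [Equiv.Perm.sameCycle_conj]; simp
  simp only [Equiv.Perm.mul_apply, Equiv.Perm.cycleOf_apply]
  rw [apply_ite w]
  simp only [hsc, Equiv.apply_symm_apply, (show w (w⁻¹ y) = y by simp)]

lemma card_support_cycleOf_conj {α : Type*} [DecidableEq α] [Fintype α] (σ w : Perm α) (x : α) :
    (Equiv.Perm.cycleOf (w * σ * w⁻¹) (w x)).support.card = (σ.cycleOf x).support.card := by
  rw [cycleOf_conj', Equiv.Perm.card_support_conj]

def eLeft (β γ : Type*) : β ≃ {x : β ⊕ γ // x.isLeft = true} where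
  toFun b := ⟨Sum.inl b, rfl⟩
  invFun x := x.1.getLeft x.2
  left_inv b := rfl
  right_inv := by rintro ⟨x, hx⟩; cases x with
    | inl b => rfl
    | inr b => simp at hx

def eRight (β γ : Type*) : γ ≃ {x : β ⊕ γ // x.isRight = true} where
  toFun b := ⟨Sum.inr b, rfl⟩
  invFun x := x.1.getRight x.2
  left_inv b := rfl
  right_inv := by rintro ⟨x, hx⟩; cases x with
    | inl b => simp at hx
    | inr b => rfl

lemma sumCongr_one_right (c : Perm β) :
    Equiv.sumCongr c (1 : Perm γ) = c.extendDomain (eLeft β γ) := by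
  ext x
  cases x with
  | inl b =>
      have : ((eLeft β γ) b : β ⊕ γ) = Sum.inl b := rfl
      rw [show (Sum.inl b : β ⊕ γ) = ((eLeft β γ) b : β ⊕ γ) from rfl]
      rw [Equiv.Perm.extendDomain_apply_image]
      simp [eLeft]
      rfl
  | inr b =>
      rw [Equiv.Perm.extendDomain_apply_not_subtype]
      · simp
      · simp

lemma sumCongr_one_left (h : Perm γ) :
    Equiv.sumCongr (1 : Perm β) h = h.extendDomain (eRight β γ) := by
  ext x
  cases x with
  | inr b =>
      rw [show (Sum.inr b : β ⊕ γ) = ((eRight β γ) b : β ⊕ γ) from rfl]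
      rw [Equiv.Perm.extendDomain_apply_image]
      simp [eRight]
      rfl
  | inl b =>
      rw [Equiv.Perm.extendDomain_apply_not_subtype]
      · simp
      · simp

lemma cycleType_sumCongr (c : Perm β) (h : Perm γ) :
    Equiv.Perm.cycleType (Equiv.sumCongr c h) = c.cycleType + h.cycleType := by
  have hd : Equiv.Perm.Disjoint (Equiv.sumCongr c (1 : Perm γ))
      (Equiv.sumCongr (1 : Perm β) h) := by
    intro x
    cases x with
    | inl b => right; simp
    | inr b => left; simp
  have hmul : Equiv.sumCongr c h
      = Equiv.sumCongr c (1 : Perm γ) * Equiv.sumCongr (1 : Perm β) h := by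
    rw [Equiv.Perm.sumCongr_mul]; simp
  rw [hmul, hd.cycleType_mul, sumCongr_one_right, sumCongr_one_left,
    Equiv.Perm.cycleType_extendDomain, Equiv.Perm.cycleType_extendDomain]

lemma cycleType_permCongr {α β : Type*} [DecidableEq α] [Fintype α] [DecidableEq β] [Fintype β]
    (e : α ≃ β) (g : Perm α) :
    Equiv.Perm.cycleType (e.permCongr g) = g.cycleType := by
  classical
  let f : α ≃ {x : β // (fun _ : β => True) x} :=
    e.trans (Equiv.subtypeUnivEquiv (fun _ => trivial)).symm
  have : e.permCongr g = g.extendDomain f := by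
    ext x
    rw [Equiv.Perm.extendDomain_apply_subtype _ f trivial]
    simp [f, Equiv.subtypeUnivEquiv]
  rw [this, Equiv.Perm.cycleType_extendDomain]

lemma commute_iff_mem_zpowers {α : Type*} [DecidableEq α] [Fintype α] {c : Perm α}
    (hc : c.IsCycle) (hsupp : c.support = Finset.univ) (g : Perm α) :
    Commute g c ↔ g ∈ Subgroup.zpowers c := by
  constructor
  · intro hgc
    obtain ⟨hc', hmem⟩ := (hc.commute_iff).mp hgc
    have : Equiv.Perm.ofSubtype (Equiv.Perm.subtypePerm g hc') = g := by
      ext x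
      have hx : x ∈ c.support := hsupp ▸ Finset.mem_univ x
      rw [Equiv.Perm.ofSubtype_apply_of_mem _ hx]
      rfl
    rwa [this] at hmem
  · rintro ⟨k, rfl⟩
    exact (Commute.refl c).zpow_left k

lemma card_commute_cycle {α : Type*} [DecidableEq α] [Fintype α] {c : Perm α}
    (hc : c.IsCycle) (hsupp : c.support = Finset.univ) :
    Nat.card {g : Perm α // Commute g c} = orderOf c := by
  rw [Nat.card_congr (Equiv.subtypeEquivRight (fun g => commute_iff_mem_zpowers hc hsupp g))]
  exact Nat.card_zpowers c

theorem count_main (m ℓ : ℕ) (hm : 2 ≤ m) (T : Multiset ℕ → Prop)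
    (hTm : ∀ t, T t → m ∉ t) :
    Nat.card {g : Perm (Fin m ⊕ Fin ℓ) //
        m ∈ Equiv.Perm.cycleType g ∧ T ((Equiv.Perm.cycleType g).erase m)}
      * (m * ℓ.factorial)
    = (m + ℓ).factorial *
      Nat.card {h : Perm (Fin ℓ) // T (Equiv.Perm.cycleType h)} := by
  classical
  set c₀ : Perm (Fin m) := finRotate m with hc₀def
  have hct : Equiv.Perm.cycleType c₀ = {m} := cycleType_finRotate_of_le hm
  have hcyc : c₀.IsCycle := by
    rw [← Equiv.Perm.card_cycleType_eq_one, hct]; rfl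
  have hsupp : c₀.support = Finset.univ := by
    apply Finset.eq_univ_of_card
    have := Equiv.Perm.sum_cycleType c₀
    rw [hct] at this
    simp only [Multiset.sum_singleton] at this
    simp [← this]
  have horder : orderOf c₀ = m := by
    rw [← Equiv.Perm.lcm_cycleType, hct, Multiset.lcm_singleton]
    exact normalize_eq m
  set S := {g : Perm (Fin m ⊕ Fin ℓ) //
      m ∈ Equiv.Perm.cycleType g ∧ T ((Equiv.Perm.cycleType g).erase m)} with hSdef
  set Q := {h : Perm (Fin ℓ) // T (Equiv.Perm.cycleType h)} with hQdef
  have hctJ : ∀ h : Perm (Fin ℓ),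
      Equiv.Perm.cycleType (Equiv.sumCongr c₀ h) = m ::ₘ Equiv.Perm.cycleType h := by
    intro h
    rw [cycleType_sumCongr, hct, ← Multiset.singleton_add]
  have hΦmem : ∀ (f : Perm (Fin m ⊕ Fin ℓ)) (h : Q),
      m ∈ Equiv.Perm.cycleType (f * Equiv.sumCongr c₀ h.1 * f⁻¹) ∧
      T ((Equiv.Perm.cycleType (f * Equiv.sumCongr c₀ h.1 * f⁻¹)).erase m) := by
    intro f h
    rw [Equiv.Perm.cycleType_conj, hctJ]
    exact ⟨Multiset.mem_cons_self _ _, by rw [Multiset.erase_cons_head]; exact h.2⟩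
  set Φ : Perm (Fin m ⊕ Fin ℓ) × Q → S :=
    fun p => ⟨p.1 * Equiv.sumCongr c₀ p.2.1 * p.1⁻¹, hΦmem p.1 p.2⟩ with hΦdef
  have hsurj : Function.Surjective Φ := by
    rintro ⟨g, hg1, hg2⟩
    have hgt : Equiv.Perm.cycleType g = m ::ₘ (Equiv.Perm.cycleType g).erase m :=
      (Multiset.cons_erase hg1).symm
    obtain ⟨h, hh⟩ : ∃ h : Perm (Fin ℓ),
        Equiv.Perm.cycleType h = (Equiv.Perm.cycleType g).erase m := by
      rw [Equiv.Perm.exists_with_cycleType_iff]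
      constructor
      · have h1 : (Equiv.Perm.cycleType g).sum ≤ m + ℓ := by
          rw [Equiv.Perm.sum_cycleType]
          calc g.support.card ≤ Fintype.card (Fin m ⊕ Fin ℓ) := Finset.card_le_univ _
            _ = m + ℓ := by simp
        have h2 : (Equiv.Perm.cycleType g).sum
            = m + ((Equiv.Perm.cycleType g).erase m).sum := by
          conv_lhs => rw [hgt]
          rw [Multiset.sum_cons]
        simp only [Fintype.card_fin]
        omega
      · intro a ha
        exact Equiv.Perm.two_le_of_mem_cycleType (Multiset.mem_of_mem_erase ha)
    have hconj : IsConj (Equiv.sumCongr c₀ h) g := by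
      apply Equiv.Perm.isConj_of_cycleType_eq
      rw [hctJ, hh, ← hgt]
    obtain ⟨f, hf⟩ := isConj_iff.mp hconj
    exact ⟨(f, ⟨h, by rw [hh]; exact hg2⟩), Subtype.ext hf⟩
  have hfib : ∀ y : S, Nat.card {x : Perm (Fin m ⊕ Fin ℓ) × Q // Φ x = y}
      = m * ℓ.factorial := by
    intro y
    obtain ⟨⟨f₁, h₁⟩, hx₁⟩ := hsurj y
    have hx₁' : f₁ * Equiv.sumCongr c₀ h₁.1 * f₁⁻¹ = y.1 := congrArg Subtype.val hx₁
    set Ψ : {u : Perm (Fin m) // Commute u c₀} × Perm (Fin ℓ)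
        → {x : Perm (Fin m ⊕ Fin ℓ) × Q // Φ x = y} := fun p =>
      ⟨(f₁ * Equiv.sumCongr p.1.1 p.2,
        ⟨p.2⁻¹ * h₁.1 * p.2, by
          have : p.2⁻¹ * h₁.1 * p.2 = p.2⁻¹ * h₁.1 * (p.2⁻¹)⁻¹ := by group
          rw [this, Equiv.Perm.cycleType_conj]
          exact h₁.2⟩),
        by
          apply Subtype.ext
          show f₁ * Equiv.sumCongr p.1.1 p.2 * Equiv.sumCongr c₀ (p.2⁻¹ * h₁.1 * p.2)
              * (f₁ * Equiv.sumCongr p.1.1 p.2)⁻¹ = y.1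
          rw [← hx₁']
          have hcomm : p.1.1 * c₀ * p.1.1⁻¹ = c₀ := by
            rw [p.1.2.eq]; group
          calc f₁ * Equiv.sumCongr p.1.1 p.2 * Equiv.sumCongr c₀ (p.2⁻¹ * h₁.1 * p.2)
              * (f₁ * Equiv.sumCongr p.1.1 p.2)⁻¹
              = f₁ * (Equiv.sumCongr p.1.1 p.2 * Equiv.sumCongr c₀ (p.2⁻¹ * h₁.1 * p.2)
                * (Equiv.sumCongr p.1.1 p.2)⁻¹) * f₁⁻¹ := by group
            _ = f₁ * Equiv.sumCongr c₀ h₁.1 * f₁⁻¹ := by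
                rw [Equiv.Perm.sumCongr_inv, Equiv.Perm.sumCongr_mul,
                  Equiv.Perm.sumCongr_mul]
                have h2' : p.2 * (p.2⁻¹ * h₁.1 * p.2) * p.2⁻¹ = h₁.1 := by group
                rw [hcomm, h2']⟩ with hΨdef
    have hΨinj : Function.Injective Ψ := by
      rintro ⟨u, v⟩ ⟨u', v'⟩ hp
      have h1 : f₁ * Equiv.sumCongr u.1 v = f₁ * Equiv.sumCongr u'.1 v' :=
        congrArg (fun q => q.val.1) hp
      have h2 : Equiv.sumCongr u.1 v = Equiv.sumCongr u'.1 v' := by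
        exact mul_left_cancel h1
      have h3 : Equiv.Perm.sumCongrHom _ _ (u.1, v) = Equiv.Perm.sumCongrHom _ _ (u'.1, v') := h2
      have h4 := Equiv.Perm.sumCongrHom_injective h3
      have h5 : u.1 = u'.1 := congrArg Prod.fst h4
      have h6 : v = v' := congrArg Prod.snd h4
      exact Prod.ext (Subtype.ext h5) h6
    have hΨsurj : Function.Surjective Ψ := by
      rintro ⟨⟨f, h⟩, hΦ⟩
      have hΦ' : f * Equiv.sumCongr c₀ h.1 * f⁻¹ = y.1 := congrArg Subtype.val hΦ
      set w := f₁⁻¹ * f with hwdef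
      have hw : w * Equiv.sumCongr c₀ h.1 * w⁻¹ = Equiv.sumCongr c₀ h₁.1 := by
        have : f * Equiv.sumCongr c₀ h.1 * f⁻¹ = f₁ * Equiv.sumCongr c₀ h₁.1 * f₁⁻¹ := by
          rw [hΦ', hx₁']
        calc w * Equiv.sumCongr c₀ h.1 * w⁻¹
            = f₁⁻¹ * (f * Equiv.sumCongr c₀ h.1 * f⁻¹) * f₁ := by rw [hwdef]; group
          _ = f₁⁻¹ * (f₁ * Equiv.sumCongr c₀ h₁.1 * f₁⁻¹) * f₁ := by rw [this]
          _ = Equiv.sumCongr c₀ h₁.1 := by group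
      have hmaps : Set.MapsTo w (Set.range Sum.inl) (Set.range Sum.inl) := by
        rintro x ⟨b, rfl⟩
        have hcard : (Equiv.Perm.cycleOf (Equiv.sumCongr c₀ h₁.1) (w (Sum.inl b))).support.card = m := by
          rw [← hw]
          rw [card_support_cycleOf_conj]
          rw [support_cycleOf_sumCongr_inl, Finset.card_map]
          rw [hcyc.cycleOf_eq]
          · rw [hsupp]; simp
          · have : b ∈ c₀.support := hsupp ▸ Finset.mem_univ b
            exact Equiv.Perm.mem_support.mp this
        rcases hww : w (Sum.inl b) with b' | j
        · exact ⟨b', rfl⟩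
        · exfalso
          rw [hww, support_cycleOf_sumCongr_inr, Finset.card_map] at hcard
          by_cases hfix : h₁.1 j = j
          · rw [(Equiv.Perm.cycleOf_eq_one_iff _).mpr hfix] at hcard
            simp at hcard
            omega
          · have hmem : ((h₁.1.cycleOf j).support.card) ∈ Equiv.Perm.cycleType h₁.1 := by
              rw [Equiv.Perm.cycleType_def]
              apply Multiset.mem_map_of_mem
              exact Equiv.Perm.cycleOf_mem_cycleFactorsFinset_iff.mpr
                (Equiv.Perm.mem_support.mpr hfix)
            rw [hcard] at hmem
            have : m ∉ Equiv.Perm.cycleType h₁.1 := by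
              intro hc
              exact hTm _ h₁.2 hc
            exact this hmem
      obtain ⟨⟨u, v⟩, huv⟩ := Equiv.Perm.mem_sumCongrHom_range_of_perm_mapsTo_inl hmaps
      have huv' : Equiv.sumCongr u v = w := huv
      have hcomp : Equiv.sumCongr (u * c₀ * u⁻¹) (v * h.1 * v⁻¹) = Equiv.sumCongr c₀ h₁.1 := by
        rw [← hw, ← huv']
        rw [Equiv.Perm.sumCongr_inv, Equiv.Perm.sumCongr_mul, Equiv.Perm.sumCongr_mul]
      have hcomp' := Equiv.Perm.sumCongrHom_injective (show Equiv.Perm.sumCongrHom _ _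
          (u * c₀ * u⁻¹, v * h.1 * v⁻¹) = Equiv.Perm.sumCongrHom _ _ (c₀, h₁.1) from hcomp)
      have hu : u * c₀ * u⁻¹ = c₀ := congrArg Prod.fst hcomp'
      have hv : v * h.1 * v⁻¹ = h₁.1 := congrArg Prod.snd hcomp'
      have hucomm : Commute u c₀ := by
        have h' := hu
        rw [mul_inv_eq_iff_eq_mul] at h'
        exact h'
      refine ⟨(⟨u, hucomm⟩, v), ?_⟩
      apply Subtype.ext
      apply Prod.ext
      · show f₁ * Equiv.sumCongr u v = f
        rw [huv', hwdef]; group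
      · apply Subtype.ext
        show v⁻¹ * h₁.1 * v = h.1
        rw [← hv]; group
    have hΨbij : Function.Bijective Ψ := ⟨hΨinj, hΨsurj⟩
    rw [← Nat.card_congr (Equiv.ofBijective Ψ hΨbij)]
    rw [Nat.card_prod]
    rw [card_commute_cycle hcyc hsupp, horder]
    congr 1
    rw [Nat.card_eq_fintype_card]
    simp [Fintype.card_perm]
  -- now sum over fibers
  have htot : Nat.card (Perm (Fin m ⊕ Fin ℓ) × Q) = Nat.card S * (m * ℓ.factorial) := by
    rw [Nat.card_congr (Equiv.sigmaFiberEquiv Φ).symm]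
    rw [Nat.card_eq_fintype_card, Fintype.card_sigma]
    have : ∀ y : S, Fintype.card {x // Φ x = y} = m * ℓ.factorial := by
      intro y
      rw [← Nat.card_eq_fintype_card]
      exact hfib y
    rw [Finset.sum_congr rfl (fun y _ => this y)]
    rw [Finset.sum_const, Finset.card_univ, smul_eq_mul, Nat.card_eq_fintype_card]
  rw [← htot, Nat.card_prod, Nat.card_eq_fintype_card (α := Perm (Fin m ⊕ Fin ℓ))]
  rw [Fintype.card_perm]
  simp [Fintype.card_sum]

theorem count_fin (n m ℓ : ℕ) (hml : m + ℓ = n) (hm : 2 ≤ m) (T : Multiset ℕ → Prop)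
    (hTm : ∀ t, T t → m ∉ t) :
    Nat.card {g : Perm (Fin n) //
        m ∈ Equiv.Perm.cycleType g ∧ T ((Equiv.Perm.cycleType g).erase m)}
      * (m * ℓ.factorial)
    = n.factorial *
      Nat.card {h : Perm (Fin ℓ) // T (Equiv.Perm.cycleType h)} := by
  classical
  have e : Fin m ⊕ Fin ℓ ≃ Fin n := finSumFinEquiv.trans (finCongr hml)
  have hcard : Nat.card {g : Perm (Fin n) //
        m ∈ Equiv.Perm.cycleType g ∧ T ((Equiv.Perm.cycleType g).erase m)}
      = Nat.card {g : Perm (Fin m ⊕ Fin ℓ) //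
        m ∈ Equiv.Perm.cycleType g ∧ T ((Equiv.Perm.cycleType g).erase m)} := by
    apply Nat.card_congr
    apply Equiv.subtypeEquiv (e.permCongr).symm
    intro g
    rw [show (e.permCongr.symm g) = e.symm.permCongr g from rfl]
    rw [cycleType_permCongr]
  rw [hcard, count_main m ℓ hm T hTm, hml]

lemma dvd_half {d o a : ℕ} (ha : 1 ≤ a) (hdo : d ∣ o) (h2o : 2 ^ a ∣ o)
    (hnd : ¬ 2 ^ a ∣ d) : d ∣ o / 2 := by
  obtain ⟨i, hile, hgcd⟩ := (Nat.dvd_prime_pow Nat.prime_two).mp (Nat.gcd_dvd_right d (2 ^ a))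
  have hia : i < a := by
    rcases lt_or_eq_of_le hile with h | h
    · exact h
    · exfalso; apply hnd; rw [← h, ← hgcd]; exact Nat.gcd_dvd_left d (2 ^ a)
  have hlcm : Nat.lcm d (2 ^ a) ∣ o := Nat.lcm_dvd hdo h2o
  have hgl : 2 ^ i * Nat.lcm d (2 ^ a) = d * 2 ^ a := by
    rw [← hgcd]; exact Nat.gcd_mul_lcm d (2 ^ a)
  have hpow : (2 : ℕ) ^ a = 2 * 2 ^ (a - i - 1) * 2 ^ i := by
    rw [mul_assoc, ← pow_add]
    rw [show a - i - 1 + i = a - 1 by omega]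
    rw [← pow_succ']
    congr 1
    omega
  have hlcm_eq : Nat.lcm d (2 ^ a) = 2 * d * 2 ^ (a - i - 1) := by
    have h2 : 2 ^ i * Nat.lcm d (2 ^ a) = 2 ^ i * (2 * d * 2 ^ (a - i - 1)) := by
      rw [hgl, hpow]; ring
    exact Nat.eq_of_mul_eq_mul_left (pow_pos (by norm_num) i) h2
  have h2d : 2 * d ∣ o := by
    refine dvd_trans ?_ hlcm
    rw [hlcm_eq]
    exact Dvd.intro _ rfl
  obtain ⟨c, hc⟩ := h2d
  have : o / 2 = d * c := by
    rw [hc, mul_assoc, Nat.mul_div_cancel_left _ (by norm_num : 0 < 2)]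
  rw [this]
  exact Dvd.intro c rfl

lemma orderOf_half_sq {G : Type*} [Group G] [Finite G] {g : G} (ho : Even (orderOf g))
    (hpos : 0 < orderOf g) : orderOf (g ^ (orderOf g / 2)) = 2 := by
  obtain ⟨c, hc⟩ := ho
  have hc' : orderOf g = 2 * c := by omega
  have hcpos : 0 < c := by omega
  rw [orderOf_pow, hc']
  rw [Nat.mul_div_cancel_left _ (by norm_num : 0 < 2)]
  rw [Nat.gcd_eq_right ⟨2, by ring⟩]
  rw [Nat.mul_div_cancel _ hcpos]

lemma structure_props {n a k : ℕ} (ha : 1 ≤ a) (g : Equiv.Perm (Fin n))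
    (hmem : 2 ^ a * k ∈ Equiv.Perm.cycleType g)
    (hdvd : ∀ d ∈ (Equiv.Perm.cycleType g).erase (2 ^ a * k), ¬ 2 ^ a ∣ d)
    (hsgn : ((-1 : ℤˣ)) ^ (((Equiv.Perm.cycleType g).erase (2 ^ a * k)).sum
        + Multiset.card ((Equiv.Perm.cycleType g).erase (2 ^ a * k))) = -1) :
    g ∈ alternatingGroup (Fin n) ∧ Even (orderOf g) ∧
      orderOf (g ^ (orderOf g / 2)) = 2 ∧
      (g ^ (orderOf g / 2)).support.card ≤ 2 ^ a * k := by
  classical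
  set m := 2 ^ a * k with hmdef
  set t := (Equiv.Perm.cycleType g).erase m with htdef
  have hct : Equiv.Perm.cycleType g = m ::ₘ t := (Multiset.cons_erase hmem).symm
  have hm2 : 2 ≤ m := Equiv.Perm.two_le_of_mem_cycleType hmem
  have h2m : 2 ∣ m := by
    refine dvd_trans ?_ ⟨k, rfl⟩
    exact dvd_pow_self 2 (by omega)
  have hmeven : Even m := even_iff_two_dvd.mpr h2m
  have hmo : m ∣ orderOf g := Equiv.Perm.dvd_of_mem_cycleType hmem
  have hsign : Equiv.Perm.sign g = 1 := by
    rw [Equiv.Perm.sign_of_cycleType, hct]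
    rw [Multiset.sum_cons, Multiset.card_cons]
    have hexp : m + t.sum + (Multiset.card t + 1) = (m + 1) + (t.sum + Multiset.card t) := by
      ring
    rw [hexp, pow_add, hsgn]
    have : ((-1 : ℤˣ)) ^ (m + 1) = -1 := Odd.neg_one_pow (by
      rcases hmeven with ⟨c, hc⟩; exact ⟨c, by omega⟩)
    rw [this]
    simp
  have hA : g ∈ alternatingGroup (Fin n) := Equiv.Perm.mem_alternatingGroup.mpr hsign
  have hEven : Even (orderOf g) := even_iff_two_dvd.mpr (dvd_trans h2m hmo)
  have hopos : 0 < orderOf g := orderOf_pos g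
  have hord2 : orderOf (g ^ (orderOf g / 2)) = 2 := orderOf_half_sq hEven hopos
  refine ⟨hA, hEven, hord2, ?_⟩
  set e := orderOf g / 2 with hedef
  have h2ao : 2 ^ a ∣ orderOf g := dvd_trans ⟨k, rfl⟩ hmo
  have hdiv : ∀ d ∈ t, d ∣ e := fun d hd =>
    dvd_half ha (Equiv.Perm.dvd_of_mem_cycleType (Multiset.mem_of_mem_erase hd)) h2ao
      (hdvd d hd)
  have hmnt : m ∉ t := fun hmt => hdvd m hmt ⟨k, rfl⟩
  have hcount : Multiset.count m (Equiv.Perm.cycleType g) = 1 := by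
    rw [hct, Multiset.count_cons_self, Multiset.count_eq_zero_of_notMem hmnt]
  have hfiltercard :
      Multiset.card ((g.cycleFactorsFinset.val).filter
        (fun c => m = (Finset.card ∘ Equiv.Perm.support) c)) = 1 := by
    rw [← Multiset.count_map, ← Equiv.Perm.cycleType_def, hcount]
  obtain ⟨cstar, hcstar⟩ := Multiset.card_eq_one.mp hfiltercard
  have hcstar_mem : cstar ∈ (g.cycleFactorsFinset.val).filter
      (fun c => m = (Finset.card ∘ Equiv.Perm.support) c) := by
    rw [hcstar]; exact Multiset.mem_singleton_self cstar
  have hcstar_card : cstar.support.card = m :=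
    ((Multiset.mem_filter.mp hcstar_mem).2).symm
  have hsub : (g ^ e).support ⊆ cstar.support := by
    intro x hx
    have hxg : x ∈ g.support := Equiv.Perm.support_pow_le g e hx
    set dx := (g.cycleOf x).support.card with hdxdef
    have hone : g.cycleOf x ∈ g.cycleFactorsFinset :=
      Equiv.Perm.cycleOf_mem_cycleFactorsFinset_iff.mpr hxg
    have hdx_mem : dx ∈ Equiv.Perm.cycleType g := by
      rw [Equiv.Perm.cycleType_def]
      exact Multiset.mem_map_of_mem _ (Finset.mem_def.mp hone)
    by_cases hdxm : dx = m
    · have hmemflt : g.cycleOf x ∈ (g.cycleFactorsFinset.val).filter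
          (fun c => m = (Finset.card ∘ Equiv.Perm.support) c) :=
        Multiset.mem_filter.mpr ⟨Finset.mem_def.mp hone, hdxm.symm⟩
      rw [hcstar] at hmemflt
      have hcx : g.cycleOf x = cstar := Multiset.mem_singleton.mp hmemflt
      rw [← hcx]
      exact Equiv.Perm.mem_support_cycleOf_iff.mpr ⟨Equiv.Perm.SameCycle.refl g x, hxg⟩
    · exfalso
      have hdxt : dx ∈ t := by
        have := hct ▸ hdx_mem
        rcases Multiset.mem_cons.mp this with h | h
        · exact absurd h hdxm
        · exact h
      have hdxe : dx ∣ e := hdiv dx hdxt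
      have hmod : e % dx = 0 := Nat.eq_zero_of_dvd_of_lt hdxe |> fun _ => Nat.mod_eq_zero_of_dvd hdxe
      have hfix := Equiv.Perm.pow_mod_card_support_cycleOf_self_apply g e x
      rw [← hdxdef, hmod, pow_zero] at hfix
      exact (Equiv.Perm.mem_support.mp hx) hfix.symm
  calc (g ^ e).support.card ≤ cstar.support.card := Finset.card_le_card hsub
    _ = m := hcstar_card

lemma pow_mul_odd_inj {a k a' k' : ℕ} (hk : Odd k) (hk' : Odd k')
    (h : 2 ^ a * k = 2 ^ a' * k') : a = a' ∧ k = k' := by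
  rcases lt_trichotomy a a' with hlt | heq | hgt
  · exfalso
    have : k = 2 ^ (a' - a) * k' := by
      have h2 : 2 ^ a * k = 2 ^ a * (2 ^ (a' - a) * k') := by
        rw [← mul_assoc, ← pow_add]
        rw [show a + (a' - a) = a' by omega]
        exact h
      exact Nat.eq_of_mul_eq_mul_left (pow_pos (by norm_num) a) h2
    have : 2 ∣ k := by
      rw [this]
      exact Dvd.dvd.mul_right (dvd_pow_self 2 (by omega)) k'
    rcases hk with ⟨c, hc⟩
    omega
  · subst heq
    exact ⟨rfl, Nat.eq_of_mul_eq_mul_left (pow_pos (by norm_num) a) h⟩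
  · exfalso
    have : k' = 2 ^ (a - a') * k := by
      have h2 : 2 ^ a' * k' = 2 ^ a' * (2 ^ (a - a') * k) := by
        rw [← mul_assoc, ← pow_add]
        rw [show a' + (a - a') = a by omega]
        exact h.symm
      exact Nat.eq_of_mul_eq_mul_left (pow_pos (by norm_num) a') h2
    have : 2 ∣ k' := by
      rw [this]
      exact Dvd.dvd.mul_right (dvd_pow_self 2 (by omega)) k
    rcases hk' with ⟨c, hc⟩
    omega

lemma not_mem_alternating_iff {ℓ : ℕ} (h : Equiv.Perm (Fin ℓ)) :
    h ∉ alternatingGroup (Fin ℓ) ↔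
      (-1 : ℤˣ) ^ ((Equiv.Perm.cycleType h).sum + Multiset.card (Equiv.Perm.cycleType h))
        = -1 := by
  rw [← Equiv.Perm.sign_of_cycleType]
  rw [Equiv.Perm.mem_alternatingGroup]
  rcases Int.units_eq_one_or (Equiv.Perm.sign h) with h1 | h1 <;> rw [h1] <;> simp <;> decide

lemma two_mul_card_not_alternating {ℓ : ℕ} (hl : 2 ≤ ℓ) :
    2 * Nat.card {h : Equiv.Perm (Fin ℓ) // h ∉ alternatingGroup (Fin ℓ)} = ℓ.factorial := by
  classical
  haveI : Nontrivial (Fin ℓ) :=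
    ⟨⟨⟨0, by omega⟩, ⟨1, by omega⟩, by simp [Fin.ext_iff]⟩⟩
  have h1 : Fintype.card {h : Equiv.Perm (Fin ℓ) // h ∉ alternatingGroup (Fin ℓ)}
      = Fintype.card (Equiv.Perm (Fin ℓ))
        - Fintype.card {h : Equiv.Perm (Fin ℓ) // h ∈ alternatingGroup (Fin ℓ)} :=
    Fintype.card_subtype_compl _
  have h2 : 2 * Fintype.card {h : Equiv.Perm (Fin ℓ) // h ∈ alternatingGroup (Fin ℓ)}
      = Fintype.card (Equiv.Perm (Fin ℓ)) := by
    have := two_mul_card_alternatingGroup (α := Fin ℓ)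
    convert this using 2
  have h3 : Fintype.card (Equiv.Perm (Fin ℓ)) = ℓ.factorial := by
    rw [Fintype.card_perm, Fintype.card_fin]
  rw [Nat.card_eq_fintype_card, h1]
  omega

lemma two_mul_card_alternating' {n : ℕ} (hl : 2 ≤ n) :
    2 * Nat.card (alternatingGroup (Fin n)) = n.factorial := by
  classical
  haveI : Nontrivial (Fin n) :=
    ⟨⟨⟨0, by omega⟩, ⟨1, by omega⟩, by simp [Fin.ext_iff]⟩⟩
  rw [Nat.card_eq_fintype_card]
  have := two_mul_card_alternatingGroup (α := Fin n)
  rw [this, Fintype.card_perm, Fintype.card_fin]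

/-- the per-pair ratio identity -/
lemma per_pair (n a k : ℕ) (ha : 1 ≤ a) (hm2 : 2 ≤ 2 ^ a * k) (hmn : 2 ^ a * k + 2 ≤ n) :
    (((Finset.univ.filter (fun g : Equiv.Perm (Fin n) =>
        2 ^ a * k ∈ Equiv.Perm.cycleType g ∧
        (∀ d ∈ (Equiv.Perm.cycleType g).erase (2 ^ a * k), ¬ 2 ^ a ∣ d) ∧
        (-1 : ℤˣ) ^ (((Equiv.Perm.cycleType g).erase (2 ^ a * k)).sum
          + Multiset.card ((Equiv.Perm.cycleType g).erase (2 ^ a * k))) = -1)).card : ℝ))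
      / (Nat.card (alternatingGroup (Fin n)) : ℝ)
    = cNot (2 ^ a) (n - 2 ^ a * k) / ((2 : ℝ) ^ a * k) := by
  classical
  set m := 2 ^ a * k with hmdef
  set ℓ := n - m with hldef
  have hml : m + ℓ = n := by omega
  have hl2 : 2 ≤ ℓ := by omega
  have hn2 : 2 ≤ n := by omega
  set Ta : Multiset ℕ → Prop := fun t =>
    (∀ d ∈ t, ¬ 2 ^ a ∣ d) ∧
    (-1 : ℤˣ) ^ (t.sum + Multiset.card t) = -1 with hTa
  have hTm : ∀ t, Ta t → m ∉ t := by
    intro t ht hmt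
    exact ht.1 m hmt ⟨k, rfl⟩
  have hcount := count_fin n m ℓ hml hm2 Ta hTm
  -- identify numerator of cNot
  have hQ : Nat.card {h : Equiv.Perm (Fin ℓ) // Ta (Equiv.Perm.cycleType h)}
      = Nat.card {h : Equiv.Perm (Fin ℓ) //
          h ∉ alternatingGroup (Fin ℓ) ∧ ∀ d ∈ Equiv.Perm.cycleType h, ¬ (2 ^ a) ∣ d} := by
    apply Nat.card_congr
    apply Equiv.subtypeEquivRight
    intro h
    rw [not_mem_alternating_iff]
    constructor
    · rintro ⟨hd, hsg⟩; exact ⟨hsg, hd⟩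
    · rintro ⟨hsg, hd⟩; exact ⟨hd, hsg⟩
  have hS : Nat.card {g : Equiv.Perm (Fin n) //
      m ∈ Equiv.Perm.cycleType g ∧ Ta ((Equiv.Perm.cycleType g).erase m)}
      = (Finset.univ.filter (fun g : Equiv.Perm (Fin n) =>
        2 ^ a * k ∈ Equiv.Perm.cycleType g ∧
        (∀ d ∈ (Equiv.Perm.cycleType g).erase (2 ^ a * k), ¬ 2 ^ a ∣ d) ∧
        (-1 : ℤˣ) ^ (((Equiv.Perm.cycleType g).erase (2 ^ a * k)).sum
          + Multiset.card ((Equiv.Perm.cycleType g).erase (2 ^ a * k))) = -1)).card := by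
    rw [Nat.card_eq_fintype_card, Fintype.card_subtype]
  set Sc := (Finset.univ.filter (fun g : Equiv.Perm (Fin n) =>
        2 ^ a * k ∈ Equiv.Perm.cycleType g ∧
        (∀ d ∈ (Equiv.Perm.cycleType g).erase (2 ^ a * k), ¬ 2 ^ a ∣ d) ∧
        (-1 : ℤˣ) ^ (((Equiv.Perm.cycleType g).erase (2 ^ a * k)).sum
          + Multiset.card ((Equiv.Perm.cycleType g).erase (2 ^ a * k))) = -1)).card with hScdef
  set Qc := Nat.card {h : Equiv.Perm (Fin ℓ) //
      h ∉ alternatingGroup (Fin ℓ) ∧ ∀ d ∈ Equiv.Perm.cycleType h, ¬ (2 ^ a) ∣ d} with hQcdef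
  set Dc := Nat.card {h : Equiv.Perm (Fin ℓ) // h ∉ alternatingGroup (Fin ℓ)} with hDcdef
  set Ac := Nat.card (alternatingGroup (Fin n)) with hAcdef
  have e1 : Sc * (m * ℓ.factorial) = n.factorial * Qc := by
    rw [← hS, ← hQ]; exact hcount
  have e2 : 2 * Dc = ℓ.factorial := two_mul_card_not_alternating hl2
  have e3 : 2 * Ac = n.factorial := two_mul_card_alternating' hn2
  have key : Sc * m * Dc = Ac * Qc := by
    have h2 : 2 * (Sc * m * Dc) = 2 * (Ac * Qc) := by
      calc 2 * (Sc * m * Dc) = Sc * (m * (2 * Dc)) := by ring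
        _ = Sc * (m * ℓ.factorial) := by rw [e2]
        _ = n.factorial * Qc := e1
        _ = (2 * Ac) * Qc := by rw [e3]
        _ = 2 * (Ac * Qc) := by ring
    omega
  have hDpos : 0 < Dc := by
    have : 2 ≤ ℓ.factorial := by
      calc 2 = Nat.factorial 2 := rfl
        _ ≤ ℓ.factorial := Nat.factorial_le hl2
    omega
  have hApos : 0 < Ac := Nat.card_pos
  have hmpos : 0 < m := by omega
  rw [cNot]
  rw [← hQcdef, ← hDcdef]
  have hcast : ((2 : ℝ) ^ a * k) = (m : ℝ) := by
    rw [hmdef]; push_cast; ring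
  rw [hcast, div_div]
  rw [div_eq_div_iff (ne_of_gt (by exact_mod_cast hApos : (0:ℝ) < (Ac : ℝ)))
    (ne_of_gt (by
      have h1 : (0:ℝ) < (Dc:ℝ) := by exact_mod_cast hDpos
      have h2 : (0:ℝ) < (m:ℝ) := by exact_mod_cast hmpos
      positivity))]
  push_cast
  have := congrArg (fun x : ℕ => (x : ℝ)) key
  push_cast at this
  linarith [this]

theorem stmt6 (ε : ℝ) (hε : ε ∈ Set.Ioo (0 : ℝ) 1) (n : ℕ)
    (h1 : ⌈(Real.log n + 1) ^ 2⌉ < ⌈(n : ℝ) ^ ε⌉)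
    (h2 : ⌈(n : ℝ) ^ ε⌉ ≤ (n : ℤ) - 2 * ⌈Real.log n⌉)
    (K : ℕ) (hK : (K : ℤ) = ⌈(n : ℝ) ^ ε⌉ / ⌈Real.log n⌉) :
    altPropn n ε ≥
      ∑ k ∈ (Finset.Icc 1 K).filter (fun k => Odd k),
        ∑ a ∈ Finset.Icc 2 (Nat.log 2 ⌈Real.log n⌉.toNat),
          cNot (2 ^ a) (n - 2 ^ a * k) / ((2 : ℝ) ^ a * k) := by
  classical
  set B : ℤ := ⌈(n : ℝ) ^ ε⌉ with hB
  set L : ℤ := ⌈Real.log n⌉ with hL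
  set s : Finset (ℕ × ℕ) :=
    ((Finset.Icc 1 K).filter (fun k => Odd k)) ×ˢ (Finset.Icc 2 (Nat.log 2 L.toNat)) with hs
  set P : ℕ × ℕ → Equiv.Perm (Fin n) → Prop := fun p g =>
    2 ^ p.2 * p.1 ∈ Equiv.Perm.cycleType g ∧
    (∀ d ∈ (Equiv.Perm.cycleType g).erase (2 ^ p.2 * p.1), ¬ 2 ^ p.2 ∣ d) ∧
    (-1 : ℤˣ) ^ (((Equiv.Perm.cycleType g).erase (2 ^ p.2 * p.1)).sum
      + Multiset.card ((Equiv.Perm.cycleType g).erase (2 ^ p.2 * p.1))) = -1 with hP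
  set SF : ℕ × ℕ → Finset (Equiv.Perm (Fin n)) :=
    fun p => Finset.univ.filter (fun g => P p g) with hSF
  have hApos : 0 < Nat.card (alternatingGroup (Fin n)) := Nat.card_pos
  -- numeric facts
  have hnum : ∀ p ∈ s, 2 ≤ 2 ^ p.2 * p.1 ∧ 2 ^ p.2 * p.1 + 2 ≤ n ∧
      ((2 ^ p.2 * p.1 : ℕ) : ℤ) ≤ B ∧ Odd p.1 ∧ 1 ≤ p.2 := by
    intro p hp
    rw [hs, Finset.mem_product, Finset.mem_filter, Finset.mem_Icc, Finset.mem_Icc] at hp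
    obtain ⟨⟨⟨hk1, hkK⟩, hodd⟩, ha2, haA⟩ := hp
    have hLt0 : L.toNat ≠ 0 := by
      intro h0
      rw [h0] at haA
      rw [Nat.log_zero_right] at haA
      omega
    have hpowlog : 2 ^ Nat.log 2 L.toNat ≤ L.toNat := Nat.pow_log_le_self 2 hLt0
    have h2pow : 2 ^ p.2 ≤ L.toNat :=
      le_trans (Nat.pow_le_pow_right (by norm_num) haA) hpowlog
    have h4pow : 4 ≤ 2 ^ p.2 := by
      calc (4 : ℕ) = 2 ^ 2 := rfl
        _ ≤ 2 ^ p.2 := Nat.pow_le_pow_right (by norm_num) ha2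
    have hm2 : 2 ≤ 2 ^ p.2 * p.1 := by
      calc (2:ℕ) ≤ 2 ^ p.2 := by omega
        _ ≤ 2 ^ p.2 * p.1 := Nat.le_mul_of_pos_right _ (by omega)
    have hnatle : 2 ^ p.2 * p.1 ≤ L.toNat * K := Nat.mul_le_mul h2pow hkK
    have hL4 : (4 : ℤ) ≤ L := by omega
    have hq : B = L * K + B % L := by
      rw [hK]
      exact (Int.mul_ediv_add_emod B L).symm
    have hr : 0 ≤ B % L := Int.emod_nonneg B (by omega)
    have hLK : L * K ≤ B := by omega
    have hmB : ((2 ^ p.2 * p.1 : ℕ) : ℤ) ≤ B := by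
      calc ((2 ^ p.2 * p.1 : ℕ) : ℤ) ≤ ((L.toNat * K : ℕ) : ℤ) := by exact_mod_cast hnatle
        _ = L * K := by
          push_cast
          rw [Int.toNat_of_nonneg (by omega : (0:ℤ) ≤ L)]
        _ ≤ B := hLK
    have hmn : 2 ^ p.2 * p.1 + 2 ≤ n := by
      have h8 : ((2 ^ p.2 * p.1 : ℕ) : ℤ) + 8 ≤ (n : ℤ) := by
        have := h2
        omega
      omega
    exact ⟨hm2, hmn, hmB, hodd, by omega⟩
  -- rewrite RHS as sum over product
  rw [show (∑ k ∈ (Finset.Icc 1 K).filter (fun k => Odd k),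
        ∑ a ∈ Finset.Icc 2 (Nat.log 2 L.toNat),
          cNot (2 ^ a) (n - 2 ^ a * k) / ((2 : ℝ) ^ a * k))
      = ∑ p ∈ s, cNot (2 ^ p.2) (n - 2 ^ p.2 * p.1) / ((2 : ℝ) ^ p.2 * p.1) from
    (Finset.sum_product (f := fun p : ℕ × ℕ =>
      cNot (2 ^ p.2) (n - 2 ^ p.2 * p.1) / ((2 : ℝ) ^ p.2 * p.1)) _ _).symm]
  -- target finset
  set C' : Equiv.Perm (Fin n) → Prop := fun g =>
    Even (orderOf g) ∧ orderOf (g ^ (orderOf g / 2)) = 2 ∧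
      (((g ^ (orderOf g / 2)).support.card : ℤ) ≤ B) with hC'
  set TgtF : Finset (Equiv.Perm (Fin n)) :=
    Finset.univ.filter (fun g => g ∈ alternatingGroup (Fin n) ∧ C' g) with hTgtF
  -- altPropn identification
  have halt : altPropn n ε = (TgtF.card : ℝ) / (Nat.card (alternatingGroup (Fin n)) : ℝ) := by
    rw [altPropn]
    congr 1
    have hiff : ∀ y : alternatingGroup (Fin n),
        (Even (orderOf y) ∧ orderOf (y ^ (orderOf y / 2)) = 2 ∧
          ((((y ^ (orderOf y / 2) : alternatingGroup (Fin n)) :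
            Equiv.Perm (Fin n)).support.card : ℤ) ≤ ⌈(n : ℝ) ^ ε⌉)) ↔ C' (y : Equiv.Perm (Fin n)) := by
      intro y
      have ho : orderOf y = orderOf (y : Equiv.Perm (Fin n)) :=
        (orderOf_injective (alternatingGroup (Fin n)).subtype (Subgroup.subtype_injective _) y).symm
      have hcoe : ∀ j : ℕ, ((y ^ j : alternatingGroup (Fin n)) : Equiv.Perm (Fin n))
          = (y : Equiv.Perm (Fin n)) ^ j := fun j => by push_cast; rfl
      have hordj : ∀ j : ℕ, orderOf (y ^ j)
          = orderOf ((y : Equiv.Perm (Fin n)) ^ j) := fun j => by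
        rw [← hcoe j]
        exact (orderOf_injective (alternatingGroup (Fin n)).subtype
          (Subgroup.subtype_injective _) _).symm
      show _ ↔ Even (orderOf (y : Equiv.Perm (Fin n))) ∧
        orderOf ((y : Equiv.Perm (Fin n)) ^ (orderOf (y : Equiv.Perm (Fin n)) / 2)) = 2 ∧
        ((((y : Equiv.Perm (Fin n)) ^ (orderOf (y : Equiv.Perm (Fin n)) / 2)).support.card : ℤ)
          ≤ B)
      rw [ho, hordj, hcoe]
    have e1 := Equiv.subtypeEquivRight hiff
    have e2 := Equiv.subtypeSubtypeEquivSubtypeInter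
      (fun g : Equiv.Perm (Fin n) => g ∈ alternatingGroup (Fin n)) C'
    rw [Nat.card_congr (e1.trans e2)]
    rw [Nat.card_eq_fintype_card, Fintype.card_subtype]
  -- each structured permutation is in the target
  have hsubset : ∀ p ∈ s, SF p ⊆ TgtF := by
    intro p hp g hg
    obtain ⟨hm2, hmn, hmB, hodd, ha1⟩ := hnum p hp
    rw [hSF, Finset.mem_filter] at hg
    obtain ⟨-, hmem, hdvd, hsgn⟩ := hg
    obtain ⟨hA, hEv, hO2, hcard⟩ := structure_props ha1 g hmem hdvd hsgn
    rw [hTgtF, Finset.mem_filter]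
    refine ⟨Finset.mem_univ _, hA, hEv, hO2, ?_⟩
    calc (((g ^ (orderOf g / 2)).support.card : ℤ))
        ≤ ((2 ^ p.2 * p.1 : ℕ) : ℤ) := by exact_mod_cast hcard
      _ ≤ B := hmB
  -- disjointness
  have hdisj : ∀ p ∈ s, ∀ q ∈ s, p ≠ q → Disjoint (SF p) (SF q) := by
    intro p hp q hq hne
    rw [Finset.disjoint_left]
    intro g hgp hgq
    obtain ⟨_, _, _, hoddp, hap⟩ := hnum p hp
    obtain ⟨_, _, _, hoddq, haq⟩ := hnum q hq
    rw [hSF, Finset.mem_filter] at hgp hgq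
    obtain ⟨-, hmemp, hdvdp, -⟩ := hgp
    obtain ⟨-, hmemq, hdvdq, -⟩ := hgq
    by_cases hmm : 2 ^ p.2 * p.1 = 2 ^ q.2 * q.1
    · obtain ⟨hae, hke⟩ := pow_mul_odd_inj hoddp hoddq hmm
      exact hne (Prod.ext hke hae)
    · rcases le_total p.2 q.2 with hle | hle
      · apply hdvdp (2 ^ q.2 * q.1) ((Multiset.mem_erase_of_ne (Ne.symm hmm)).mpr hmemq)
        exact dvd_trans (pow_dvd_pow 2 hle) (Dvd.intro q.1 rfl)
      · apply hdvdq (2 ^ p.2 * p.1) ((Multiset.mem_erase_of_ne hmm).mpr hmemp)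
        exact dvd_trans (pow_dvd_pow 2 hle) (Dvd.intro p.1 rfl)
  -- per-term values
  have hterm : ∀ p ∈ s, cNot (2 ^ p.2) (n - 2 ^ p.2 * p.1) / ((2 : ℝ) ^ p.2 * p.1)
      = ((SF p).card : ℝ) / (Nat.card (alternatingGroup (Fin n)) : ℝ) := by
    intro p hp
    obtain ⟨hm2, hmn, hmB, hodd, ha1⟩ := hnum p hp
    exact (per_pair n p.2 p.1 ha1 hm2 hmn).symm
  rw [Finset.sum_congr rfl hterm]
  rw [← Finset.sum_div]
  rw [halt]
  rw [ge_iff_le, div_le_div_iff_of_pos_right (by exact_mod_cast hApos)]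
  rw [← Nat.cast_sum]
  have hcardsum : ∑ p ∈ s, (SF p).card ≤ TgtF.card := by
    rw [← Finset.card_biUnion hdisj]
    apply Finset.card_le_card
    intro g hg
    rw [Finset.mem_biUnion] at hg
    obtain ⟨p, hp, hgp⟩ := hg
    exact hsubset p hp hgp
  exact_mod_cast hcardsum
end
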